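/- In a finite poset (X,⪯), let T_1,...,T_n be upsets and x an element contained in all of T_1,...,T_l and none of T_{l+1},...,T_n. Suppose x covers exactly one element y with y ∈ T_1∪⋯∪T_l, and let B = {k ≤ l : y ∉ T_k}. Then x is a minimal element of ∩_{k∈A}T_k (for A ⊆ {1,...,l}) if and only if A ∩ B ≠ ∅, and consequently ∑_{A⊆{1,...,l}, x minimal in ∩_{k∈A}T_k} (-1)^{|A|} = 0. -/
import Mathlib

open Finset
open scoped Classical

theorem minimal_iff_meets_B {X : Type*} [Fintype X] [PartialOrder X]
    (n l : ℕ) (hl : l ≤ n)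
    (T : Fin n → Set X) (hT : ∀ k, IsUpperSet (T k))
    (x : X)
    (hxin : ∀ k : Fin n, (k : ℕ) < l → x ∈ T k)
    (hxout : ∀ k : Fin n, l ≤ (k : ℕ) → x ∉ T k)
    (y : X) (hy : y ⋖ x)
    (hyU : ∃ k : Fin n, (k : ℕ) < l ∧ y ∈ T k)
    (huniq : ∀ z : X, z ⋖ x → (∃ k : Fin n, (k : ℕ) < l ∧ z ∈ T k) → z = y)
    (B : Finset (Fin n))
    (hB : B = Finset.univ.filter (fun k : Fin n => (k : ℕ) < l ∧ y ∉ T k)) :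
    (∀ A : Finset (Fin n), A ⊆ Finset.univ.filter (fun k : Fin n => (k : ℕ) < l) →
      (Minimal (· ∈ ⋂ k ∈ A, T k) x ↔ (A ∩ B).Nonempty)) ∧
    ∑ A ∈ (Finset.univ.filter (fun k : Fin n => (k : ℕ) < l)).powerset,
      (if Minimal (· ∈ ⋂ k ∈ A, T k) x then (-1 : ℤ) ^ A.card else 0) = 0 := by
  set L : Finset (Fin n) := Finset.univ.filter (fun k : Fin n => (k : ℕ) < l) with hL
  have hmem : ∀ k : Fin n, k ∈ L ↔ (k : ℕ) < l := by
    intro k; simp [hL]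
  have hBmem : ∀ k : Fin n, k ∈ B ↔ ((k : ℕ) < l ∧ y ∉ T k) := by
    intro k; simp [hB]
  have key : ∀ A : Finset (Fin n), A ⊆ L →
      (Minimal (· ∈ ⋂ k ∈ A, T k) x ↔ (A ∩ B).Nonempty) := by
    intro A hA
    have hxA : x ∈ ⋂ k ∈ A, T k := by
      simp only [Set.mem_iInter]
      intro k hk
      exact hxin k ((hmem k).1 (hA hk))
    constructor
    · intro hmin
      by_contra hne
      rw [Finset.not_nonempty_iff_eq_empty] at hne
      -- then y ∈ ⋂ and y < x, contradicting minimality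
      have hyA : y ∈ ⋂ k ∈ A, T k := by
        simp only [Set.mem_iInter]
        intro k hk
        by_contra hyk
        have : k ∈ A ∩ B := Finset.mem_inter.2 ⟨hk, (hBmem k).2 ⟨(hmem k).1 (hA hk), hyk⟩⟩
        simp [hne] at this
      have := hmin.2 hyA hy.le
      exact hy.lt.ne (le_antisymm hy.le this)
    · rintro ⟨k, hk⟩
      rw [Finset.mem_inter] at hk
      obtain ⟨hkA, hkB⟩ := hk
      obtain ⟨hkl, hyk⟩ := (hBmem k).1 hkB
      refine ⟨hxA, ?_⟩
      intro z hz hzx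
      by_contra hxz
      have hzlt : z < x := lt_of_le_of_ne hzx (fun h => hxz (h ▸ le_refl x))
      obtain ⟨w, hzw, hwx⟩ := exists_le_covBy_of_lt hzlt
      have hwT : ∀ j ∈ A, w ∈ T j := by
        intro j hj
        have hzT : z ∈ T j := by
          simp only [Set.mem_iInter] at hz; exact hz j hj
        exact hT j hzw hzT
      have hwy : w = y := huniq w hwx ⟨k, hkl, hwT k hkA⟩
      exact hyk (hwy ▸ hwT k hkA)
  refine ⟨key, ?_⟩
  have hsum : ∑ A ∈ L.powerset,
      (if Minimal (· ∈ ⋂ k ∈ A, T k) x then (-1 : ℤ) ^ A.card else 0)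
      = ∑ A ∈ L.powerset, (if (A ∩ B).Nonempty then (-1 : ℤ) ^ A.card else 0) := by
    apply Finset.sum_congr rfl
    intro A hA
    exact if_congr (key A (Finset.mem_powerset.1 hA)) rfl rfl
  rw [hsum]
  have split : ∀ A ∈ L.powerset,
      (if (A ∩ B).Nonempty then (-1 : ℤ) ^ A.card else 0)
      = (-1 : ℤ) ^ A.card - (if A ⊆ L \ B then (-1 : ℤ) ^ A.card else 0) := by
    intro A hA
    by_cases h : (A ∩ B).Nonempty
    · have : ¬ A ⊆ L \ B := by
        obtain ⟨k, hk⟩ := h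
        rw [Finset.mem_inter] at hk
        intro hsub
        have := hsub hk.1
        rw [Finset.mem_sdiff] at this
        exact this.2 hk.2
      simp [h, this]
    · have : A ⊆ L \ B := by
        intro k hk
        rw [Finset.mem_sdiff]
        refine ⟨Finset.mem_powerset.1 hA hk, fun hkB => ?_⟩
        exact h ⟨k, Finset.mem_inter.2 ⟨hk, hkB⟩⟩
      simp [h, this]
  rw [Finset.sum_congr rfl split, Finset.sum_sub_distrib]
  have h1 : ∑ A ∈ L.powerset, (-1 : ℤ) ^ A.card = 0 := by
    rw [Finset.sum_powerset_neg_one_pow_card]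
    have : L.Nonempty := by
      obtain ⟨k, hkl, _⟩ := hyU
      exact ⟨k, (hmem k).2 hkl⟩
    simp [Finset.nonempty_iff_ne_empty.1 this]
  have h2 : ∑ A ∈ L.powerset, (if A ⊆ L \ B then (-1 : ℤ) ^ A.card else 0) = 0 := by
    rw [← Finset.sum_filter]
    have hfil : L.powerset.filter (fun A => A ⊆ L \ B) = (L \ B).powerset := by
      ext A
      simp only [Finset.mem_filter, Finset.mem_powerset]
      constructor
      · rintro ⟨_, h⟩; exact h
      · intro h; exact ⟨h.trans (Finset.sdiff_subset), h⟩
    rw [hfil, Finset.sum_powerset_neg_one_pow_card]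
    have : (L \ B).Nonempty := by
      obtain ⟨k, hkl, hyk⟩ := hyU
      refine ⟨k, Finset.mem_sdiff.2 ⟨(hmem k).2 hkl, fun hkB => ?_⟩⟩
      exact ((hBmem k).1 hkB).2 hyk
    simp [Finset.nonempty_iff_ne_empty.1 this]
  rw [h1, h2]; ring
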